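/- The Bayesian α-Fisher metric decomposes as g^{(I_α)}_{i,j}(θ) = λ(θ)[ Cov_{p_θ^{(α)}}(∂_i log p_θ, ∂_j log p_θ) + ∂_i log λ(θ) · ∂_j log λ(θ) ], i.e., in the 1-dimensional case with θ ∈ ℝ: -∂_{θ'}∂_θ I_α(p̃_θ, p̃_{θ'})|_{θ'=θ} = λ(θ)[ Var_{p_θ^{(α)}}(∂_θ log p_θ) + (∂_θ log λ(θ))² ]. -/

import Mathlib

open Real Finset

/-- The Bayesian α-Fisher metric decomposition (one-dimensional case):
the Eguchi metric of the Bayesian relative α-entropy equals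
λ(θ)[ Var_{p_θ^{(α)}}(∂_θ log p_θ) + (∂_θ log λ(θ))² ]. -/
theorem bayes_alpha_metric_decomposition {X : Type*} [Fintype X]
    (p : ℝ → X → ℝ) (lam : ℝ → ℝ) (θ₀ : ℝ)
    (hpos : ∀ θ x, 0 < p θ x) (hsum : ∀ θ, ∑ x, p θ x = 1)
    (hlam_pos : ∀ θ, 0 < lam θ)
    (hp_smooth : ∀ x, ContDiff ℝ 2 (fun θ => p θ x))
    (hlam_smooth : ContDiff ℝ 2 lam)
    (α : ℝ) (hα : 0 < α) (hα1 : α ≠ 1) :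
    -(deriv (fun θ' =>
        deriv (fun θ =>
          (lam θ / (1 - α)) *
              Real.log (∑ x, p θ x * (lam θ' * p θ' x) ^ (α - 1))
            + lam θ'
            - lam θ * (Real.log (∑ x, (p θ x) ^ α) / (α * (1 - α))
                - (1 + Real.log (lam θ))
                - (1 / α) * Real.log (∑ x, (p θ' x) ^ α))) θ₀) θ₀)
    = lam θ₀ *
        (((∑ x, ((p θ₀ x) ^ α / (∑ y, (p θ₀ y) ^ α)) *
              (deriv (fun θ => p θ x) θ₀ / p θ₀ x) ^ 2)
          - (∑ x, ((p θ₀ x) ^ α / (∑ y, (p θ₀ y) ^ α)) *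
              (deriv (fun θ => p θ x) θ₀ / p θ₀ x)) ^ 2)
        + (deriv (fun θ => Real.log (lam θ)) θ₀) ^ 2) := by
  have hlam' : ∀ s, HasDerivAt lam (deriv lam s) s :=
    fun s => ((hlam_smooth.differentiable two_ne_zero) s).hasDerivAt
  have hp' : ∀ x s, HasDerivAt (fun θ => p θ x) (deriv (fun θ => p θ x) s) s :=
    fun x s => (((hp_smooth x).differentiable two_ne_zero) s).hasDerivAt
  have hne : Nonempty X := by
    rcases isEmpty_or_nonempty X with h | h
    · exact absurd (hsum θ₀) (by simp)
    · exact h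
  have hl0 := hlam_pos θ₀
  have hSpos : (0:ℝ) < ∑ x, p θ₀ x ^ α :=
    Finset.sum_pos (fun x _ => Real.rpow_pos_of_pos (hpos θ₀ x) α) univ_nonempty
  have h1α : (1:ℝ) - α ≠ 0 := sub_ne_zero.mpr (Ne.symm hα1)
  -- Stage 1: compute the inner derivative
  have key1 : ∀ θ' : ℝ, deriv (fun θ =>
          (lam θ / (1 - α)) *
              Real.log (∑ x, p θ x * (lam θ' * p θ' x) ^ (α - 1))
            + lam θ'
            - lam θ * (Real.log (∑ x, (p θ x) ^ α) / (α * (1 - α))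
                - (1 + Real.log (lam θ))
                - (1 / α) * Real.log (∑ x, (p θ' x) ^ α))) θ₀
      = deriv lam θ₀ / (1 - α) *
            Real.log (∑ x, p θ₀ x * (lam θ' * p θ' x) ^ (α - 1))
        + lam θ₀ / (1 - α) *
            ((∑ x, deriv (fun θ => p θ x) θ₀ * (lam θ' * p θ' x) ^ (α - 1)) /
              (∑ x, p θ₀ x * (lam θ' * p θ' x) ^ (α - 1)))
        - deriv lam θ₀ * (Real.log (∑ x, (p θ₀ x) ^ α) / (α * (1 - α))
                - (1 + Real.log (lam θ₀))
                - (1 / α) * Real.log (∑ x, (p θ' x) ^ α))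
        - lam θ₀ * ((∑ x, deriv (fun θ => p θ x) θ₀ * α * p θ₀ x ^ (α - 1)) /
              (∑ x, (p θ₀ x) ^ α) / (α * (1 - α))
            - deriv lam θ₀ / lam θ₀) := by
    intro t
    have hTpos : (0:ℝ) < ∑ x, p θ₀ x * (lam t * p t x) ^ (α - 1) :=
      Finset.sum_pos (fun x _ => mul_pos (hpos θ₀ x)
        (Real.rpow_pos_of_pos (mul_pos (hlam_pos t) (hpos t x)) _)) univ_nonempty
    have hT : HasDerivAt (fun θ => ∑ x, p θ x * (lam t * p t x) ^ (α - 1))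
        (∑ x, deriv (fun θ => p θ x) θ₀ * (lam t * p t x) ^ (α - 1)) θ₀ :=
      HasDerivAt.fun_sum fun i _ => (hp' i θ₀).mul_const _
    have hS : HasDerivAt (fun θ => ∑ x, p θ x ^ α)
        (∑ x, deriv (fun θ => p θ x) θ₀ * α * p θ₀ x ^ (α - 1)) θ₀ :=
      HasDerivAt.fun_sum fun i _ => (hp' i θ₀).rpow_const (Or.inl (hpos θ₀ i).ne')
    have h1 := ((hlam' θ₀).div_const (1 - α)).fun_mul (hT.log hTpos.ne')
    have h2 := (((hS.log hSpos.ne').div_const (α * (1 - α))).fun_sub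
        ((hasDerivAt_const θ₀ (1:ℝ)).fun_add ((hlam' θ₀).log hl0.ne'))).fun_sub
        (hasDerivAt_const θ₀ ((1/α) * Real.log (∑ x, (p t x) ^ α)))
    have hF := (h1.fun_add (hasDerivAt_const θ₀ (lam t))).fun_sub ((hlam' θ₀).fun_mul h2)
    exact hF.deriv.trans (by ring)
  rw [show (fun θ' =>
        deriv (fun θ =>
          (lam θ / (1 - α)) *
              Real.log (∑ x, p θ x * (lam θ' * p θ' x) ^ (α - 1))
            + lam θ'
            - lam θ * (Real.log (∑ x, (p θ x) ^ α) / (α * (1 - α))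
                - (1 + Real.log (lam θ))
                - (1 / α) * Real.log (∑ x, (p θ' x) ^ α))) θ₀)
      = (fun θ' =>
        deriv lam θ₀ / (1 - α) *
            Real.log (∑ x, p θ₀ x * (lam θ' * p θ' x) ^ (α - 1))
        + lam θ₀ / (1 - α) *
            ((∑ x, deriv (fun θ => p θ x) θ₀ * (lam θ' * p θ' x) ^ (α - 1)) /
              (∑ x, p θ₀ x * (lam θ' * p θ' x) ^ (α - 1)))
        - deriv lam θ₀ * (Real.log (∑ x, (p θ₀ x) ^ α) / (α * (1 - α))
                - (1 + Real.log (lam θ₀))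
                - (1 / α) * Real.log (∑ x, (p θ' x) ^ α))
        - lam θ₀ * ((∑ x, deriv (fun θ => p θ x) θ₀ * α * p θ₀ x ^ (α - 1)) /
              (∑ x, (p θ₀ x) ^ α) / (α * (1 - α))
            - deriv lam θ₀ / lam θ₀)) from funext key1]
  -- Stage 2: differentiate in θ'
  have hT0pos : (0:ℝ) < ∑ x, p θ₀ x * (lam θ₀ * p θ₀ x) ^ (α - 1) :=
    Finset.sum_pos (fun x _ => mul_pos (hpos θ₀ x)
      (Real.rpow_pos_of_pos (mul_pos hl0 (hpos θ₀ x)) _)) univ_nonempty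
  have hTf : HasDerivAt (fun t => ∑ x, p θ₀ x * (lam t * p t x) ^ (α - 1))
      (∑ x, p θ₀ x * ((deriv lam θ₀ * p θ₀ x + lam θ₀ * deriv (fun θ => p θ x) θ₀)
          * (α - 1) * (lam θ₀ * p θ₀ x) ^ (α - 1 - 1))) θ₀ :=
    HasDerivAt.fun_sum fun i _ => HasDerivAt.const_mul _
      (((hlam' θ₀).fun_mul (hp' i θ₀)).rpow_const (Or.inl (mul_pos hl0 (hpos θ₀ i)).ne'))
  have hUf : HasDerivAt (fun t => ∑ x, deriv (fun θ => p θ x) θ₀ * (lam t * p t x) ^ (α - 1))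
      (∑ x, deriv (fun θ => p θ x) θ₀ *
          ((deriv lam θ₀ * p θ₀ x + lam θ₀ * deriv (fun θ => p θ x) θ₀)
          * (α - 1) * (lam θ₀ * p θ₀ x) ^ (α - 1 - 1))) θ₀ :=
    HasDerivAt.fun_sum fun i _ => HasDerivAt.const_mul _
      (((hlam' θ₀).fun_mul (hp' i θ₀)).rpow_const (Or.inl (mul_pos hl0 (hpos θ₀ i)).ne'))
  have hSf : HasDerivAt (fun t => ∑ x, p t x ^ α)
      (∑ x, deriv (fun θ => p θ x) θ₀ * α * p θ₀ x ^ (α - 1)) θ₀ :=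
    HasDerivAt.fun_sum fun i _ => (hp' i θ₀).rpow_const (Or.inl (hpos θ₀ i).ne')
  have hGA := HasDerivAt.const_mul (deriv lam θ₀ / (1 - α)) (hTf.log hT0pos.ne')
  have hGB := HasDerivAt.const_mul (lam θ₀ / (1 - α)) (hUf.fun_div hTf hT0pos.ne')
  have hGC := HasDerivAt.const_mul (deriv lam θ₀)
      (((hasDerivAt_const θ₀ (Real.log (∑ x, (p θ₀ x) ^ α) / (α * (1 - α)))).fun_sub
        (hasDerivAt_const θ₀ (1 + Real.log (lam θ₀)))).fun_sub
        (HasDerivAt.const_mul (1/α) (hSf.log hSpos.ne')))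
  have hGD := hasDerivAt_const θ₀ (lam θ₀ *
      ((∑ x, deriv (fun θ => p θ x) θ₀ * α * p θ₀ x ^ (α - 1)) /
        (∑ x, (p θ₀ x) ^ α) / (α * (1 - α)) - deriv lam θ₀ / lam θ₀))
  have hG := ((hGA.fun_add hGB).fun_sub hGC).fun_sub hGD
  rw [hG.deriv]
  -- pointwise simplifications
  have ptA : ∀ x : X, p θ₀ x * (lam θ₀ * p θ₀ x) ^ (α - 1)
      = lam θ₀ ^ (α - 1) * p θ₀ x ^ α := by
    intro x
    rw [Real.mul_rpow hl0.le (hpos θ₀ x).le, Real.rpow_sub_one (hpos θ₀ x).ne']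
    field_simp [(hpos θ₀ x).ne']
  have ptB : ∀ x : X, deriv (fun θ => p θ x) θ₀ * (lam θ₀ * p θ₀ x) ^ (α - 1)
      = lam θ₀ ^ (α - 1) * (p θ₀ x ^ α * (deriv (fun θ => p θ x) θ₀ / p θ₀ x)) := by
    intro x
    rw [Real.mul_rpow hl0.le (hpos θ₀ x).le, Real.rpow_sub_one (hpos θ₀ x).ne']
    field_simp [(hpos θ₀ x).ne']
  have ptC : ∀ x : X, p θ₀ x * ((deriv lam θ₀ * p θ₀ x + lam θ₀ * deriv (fun θ => p θ x) θ₀)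
        * (α - 1) * (lam θ₀ * p θ₀ x) ^ (α - 1 - 1))
      = (α - 1) * lam θ₀ ^ (α - 2) * (deriv lam θ₀ * p θ₀ x ^ α
          + lam θ₀ * (p θ₀ x ^ α * (deriv (fun θ => p θ x) θ₀ / p θ₀ x))) := by
    intro x
    rw [show α - 1 - 1 = α - 2 by ring, Real.mul_rpow hl0.le (hpos θ₀ x).le,
      Real.rpow_sub (hpos θ₀ x) α 2, Real.rpow_two]
    field_simp [(hpos θ₀ x).ne']
  have ptD : ∀ x : X, deriv (fun θ => p θ x) θ₀ *
        ((deriv lam θ₀ * p θ₀ x + lam θ₀ * deriv (fun θ => p θ x) θ₀)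
        * (α - 1) * (lam θ₀ * p θ₀ x) ^ (α - 1 - 1))
      = (α - 1) * lam θ₀ ^ (α - 2) *
          (deriv lam θ₀ * (p θ₀ x ^ α * (deriv (fun θ => p θ x) θ₀ / p θ₀ x))
          + lam θ₀ * (p θ₀ x ^ α * (deriv (fun θ => p θ x) θ₀ / p θ₀ x) ^ 2)) := by
    intro x
    rw [show α - 1 - 1 = α - 2 by ring, Real.mul_rpow hl0.le (hpos θ₀ x).le,
      Real.rpow_sub (hpos θ₀ x) α 2, Real.rpow_two]
    field_simp [(hpos θ₀ x).ne']
  have ptE : ∀ x : X, deriv (fun θ => p θ x) θ₀ * α * p θ₀ x ^ (α - 1)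
      = α * (p θ₀ x ^ α * (deriv (fun θ => p θ x) θ₀ / p θ₀ x)) := by
    intro x
    rw [Real.rpow_sub_one (hpos θ₀ x).ne']
    field_simp [(hpos θ₀ x).ne']
  -- sum-level identities
  have hT0 : ∑ x, p θ₀ x * (lam θ₀ * p θ₀ x) ^ (α - 1)
      = lam θ₀ ^ (α - 1) * ∑ x, p θ₀ x ^ α := by
    rw [Finset.mul_sum]; exact Finset.sum_congr rfl fun x _ => ptA x
  have hU0 : ∑ x, deriv (fun θ => p θ x) θ₀ * (lam θ₀ * p θ₀ x) ^ (α - 1)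
      = lam θ₀ ^ (α - 1) * ∑ x, p θ₀ x ^ α * (deriv (fun θ => p θ x) θ₀ / p θ₀ x) := by
    rw [Finset.mul_sum]; exact Finset.sum_congr rfl fun x _ => ptB x
  have hDT : ∑ x, p θ₀ x * ((deriv lam θ₀ * p θ₀ x + lam θ₀ * deriv (fun θ => p θ x) θ₀)
        * (α - 1) * (lam θ₀ * p θ₀ x) ^ (α - 1 - 1))
      = (α - 1) * lam θ₀ ^ (α - 2) * (deriv lam θ₀ * ∑ x, p θ₀ x ^ α
          + lam θ₀ * ∑ x, p θ₀ x ^ α * (deriv (fun θ => p θ x) θ₀ / p θ₀ x)) := by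
    rw [Finset.sum_congr rfl fun x _ => ptC x]
    simp only [mul_add, Finset.mul_sum, Finset.sum_add_distrib]
  have hDU : ∑ x, deriv (fun θ => p θ x) θ₀ *
        ((deriv lam θ₀ * p θ₀ x + lam θ₀ * deriv (fun θ => p θ x) θ₀)
        * (α - 1) * (lam θ₀ * p θ₀ x) ^ (α - 1 - 1))
      = (α - 1) * lam θ₀ ^ (α - 2) *
          (deriv lam θ₀ * ∑ x, p θ₀ x ^ α * (deriv (fun θ => p θ x) θ₀ / p θ₀ x)
          + lam θ₀ * ∑ x, p θ₀ x ^ α * (deriv (fun θ => p θ x) θ₀ / p θ₀ x) ^ 2) := by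
    rw [Finset.sum_congr rfl fun x _ => ptD x]
    simp only [mul_add, Finset.mul_sum, Finset.sum_add_distrib]
  have hDS : ∑ x, deriv (fun θ => p θ x) θ₀ * α * p θ₀ x ^ (α - 1)
      = α * ∑ x, p θ₀ x ^ α * (deriv (fun θ => p θ x) θ₀ / p θ₀ x) := by
    rw [Finset.sum_congr rfl fun x _ => ptE x, ← Finset.mul_sum]
  have hV : ∑ x, (p θ₀ x) ^ α / (∑ y, (p θ₀ y) ^ α) * (deriv (fun θ => p θ x) θ₀ / p θ₀ x)
      = (∑ x, p θ₀ x ^ α * (deriv (fun θ => p θ x) θ₀ / p θ₀ x)) / (∑ y, (p θ₀ y) ^ α) := by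
    rw [Finset.sum_div]; exact Finset.sum_congr rfl fun x _ => div_mul_eq_mul_div _ _ _
  have hW : ∑ x, (p θ₀ x) ^ α / (∑ y, (p θ₀ y) ^ α) * (deriv (fun θ => p θ x) θ₀ / p θ₀ x) ^ 2
      = (∑ x, p θ₀ x ^ α * (deriv (fun θ => p θ x) θ₀ / p θ₀ x) ^ 2) / (∑ y, (p θ₀ y) ^ α) := by
    rw [Finset.sum_div]; exact Finset.sum_congr rfl fun x _ => div_mul_eq_mul_div _ _ _
  have hloglam : deriv (fun θ => Real.log (lam θ)) θ₀ = deriv lam θ₀ / lam θ₀ :=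
    ((hlam' θ₀).log hl0.ne').deriv
  have hl1 : lam θ₀ ^ (α - 1) = lam θ₀ ^ α / lam θ₀ := Real.rpow_sub_one hl0.ne' α
  have hl2 : lam θ₀ ^ (α - 2) = lam θ₀ ^ α / lam θ₀ ^ 2 := by
    rw [Real.rpow_sub hl0, Real.rpow_two]
  have hApos : (0:ℝ) < lam θ₀ ^ α := Real.rpow_pos_of_pos hl0 α
  rw [hT0, hU0, hDT, hDU, hDS, hV, hW, hloglam, hl1, hl2]
  field_simp
  ring
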